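/- arXiv:2005.10998 — 2 statements merged into one kernel-verified Lean document; each statement's English description precedes it below -/
import Mathlib

section
/- For a fixed true propensity score p ∈ (0,1) and α > 0, the expected NAWT pseudo-log-likelihood ℓ(q) = p·q^α/α − (1−p)·∫₀^q u^α/(1−u) du, as a function of the estimated propensity score q ∈ (0,1), has derivative ℓ'(q) = q^(α−1)·(p − q)/(1 − q) and is uniquely maximized at q = p. -/
open Set intervalIntegral

/-- The expected NAWT pseudo-log-likelihood ℓ(q) = p·q^α/α − (1−p)·∫₀^q u^α/(1−u) du
has derivative q^(α−1)·(p − q)/(1 − q) on (0,1) and is uniquely maximized at q = p. -/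
theorem stmt_11 (p α : ℝ) (hp0 : 0 < p) (hp1 : p < 1) (hα : 0 < α) :
    (∀ q ∈ Set.Ioo (0 : ℝ) 1,
        HasDerivAt (fun q : ℝ => p * q ^ α / α - (1 - p) * ∫ u in (0 : ℝ)..q, u ^ α / (1 - u))
          (q ^ (α - 1) * (p - q) / (1 - q)) q) ∧
      (∀ q ∈ Set.Ioo (0 : ℝ) 1, q ≠ p →
        p * q ^ α / α - (1 - p) * ∫ u in (0 : ℝ)..q, u ^ α / (1 - u)
          < p * p ^ α / α - (1 - p) * ∫ u in (0 : ℝ)..p, u ^ α / (1 - u)) := by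
  set f : ℝ → ℝ := fun u => u ^ α / (1 - u) with hfdef
  set L : ℝ → ℝ := fun q => p * q ^ α / α - (1 - p) * ∫ u in (0 : ℝ)..q, f u with hLdef
  have hfc : ∀ x : ℝ, x < 1 → ContinuousAt f x := by
    intro x hx
    exact (Real.continuousAt_rpow_const x α (Or.inr hα.le)).div
      (continuousAt_const.sub continuousAt_id) (by simp; linarith)
  have hfo : ContinuousOn f (Iio 1) := fun x hx => (hfc x hx).continuousWithinAt
  have hderiv : ∀ q ∈ Ioo (0:ℝ) 1, HasDerivAt L (q ^ (α - 1) * (p - q) / (1 - q)) q := by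
    intro q hq
    obtain ⟨hq0, hq1⟩ := hq
    have hint : IntervalIntegrable f MeasureTheory.volume 0 q := by
      apply ContinuousOn.intervalIntegrable
      apply hfo.mono
      rw [uIcc_of_le hq0.le]
      intro x hx
      exact lt_of_le_of_lt hx.2 hq1
    have hmeas : StronglyMeasurableAtFilter f (nhds q) :=
      hfo.stronglyMeasurableAtFilter isOpen_Iio _ hq1
    have h2 : HasDerivAt (fun r : ℝ => ∫ u in (0:ℝ)..r, f u) (f q) q :=
      intervalIntegral.integral_hasDerivAt_right hint hmeas (hfc q hq1)
    have h1 : HasDerivAt (fun r : ℝ => p * r ^ α / α) (p * q ^ (α - 1)) q := by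
      have := (Real.hasDerivAt_rpow_const (x := q) (p := α) (Or.inl hq0.ne')).const_mul p
      have h := this.div_const α
      refine h.congr_deriv ?_
      field_simp
    have := h1.sub (h2.const_mul (1 - p))
    refine this.congr_deriv ?_ |>.congr_of_eventuallyEq (Filter.Eventually.of_forall fun _ => rfl)
    have hq1' : (1 : ℝ) - q ≠ 0 := by linarith
    have hpow : q ^ (α - 1) * q = q ^ α := by
      nth_rewrite 2 [show q = q ^ (1:ℝ) by rw [Real.rpow_one]]
      rw [← Real.rpow_add hq0]; ring_nf
    simp only [f]
    field_simp
    rw [← hpow]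
    ring
  refine ⟨hderiv, ?_⟩
  have hLcont : ContinuousOn L (Ioo 0 1) := fun x hx =>
    ((hderiv x hx).continuousAt).continuousWithinAt
  intro q hq hqp
  rcases lt_or_gt_of_ne hqp with hlt | hgt
  · -- q < p : L strict mono on [q, p]
    have hsub : Icc q p ⊆ Ioo (0:ℝ) 1 := fun x hx => ⟨lt_of_lt_of_le hq.1 hx.1, lt_of_le_of_lt hx.2 hp1⟩
    have : StrictMonoOn L (Icc q p) := by
      apply strictMonoOn_of_deriv_pos (convex_Icc q p) (hLcont.mono hsub)
      intro x hx
      rw [interior_Icc] at hx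
      have hx' := hsub (Ioo_subset_Icc_self hx)
      rw [(hderiv x hx').deriv]
      have h1 : (0:ℝ) < x ^ (α - 1) := Real.rpow_pos_of_pos hx'.1 _
      have h2 : (0:ℝ) < p - x := by linarith [hx.2]
      have h3 : (0:ℝ) < 1 - x := by linarith [hx'.2]
      positivity
    exact this ⟨le_refl q, hlt.le⟩ ⟨hlt.le, le_refl p⟩ hlt
  · have hsub : Icc p q ⊆ Ioo (0:ℝ) 1 := fun x hx => ⟨lt_of_lt_of_le hp0 hx.1, lt_of_le_of_lt hx.2 hq.2⟩
    have : StrictAntiOn L (Icc p q) := by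
      apply strictAntiOn_of_deriv_neg (convex_Icc p q) (hLcont.mono hsub)
      intro x hx
      rw [interior_Icc] at hx
      have hx' := hsub (Ioo_subset_Icc_self hx)
      rw [(hderiv x hx').deriv]
      have h1 : (0:ℝ) < x ^ (α - 1) := Real.rpow_pos_of_pos hx'.1 _
      have h2 : p - x < 0 := by linarith [hx.1]
      have h3 : (0:ℝ) < 1 - x := by linarith [hx'.2]
      have : x ^ (α - 1) * (p - x) < 0 := mul_neg_of_pos_of_neg h1 h2
      exact div_neg_of_neg_of_pos this h3
    exact this ⟨le_refl p, hgt.le⟩ ⟨hgt.le, le_refl q⟩ hgt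
end

section
/- If T ⫫ (Y(0), Y(1)) conditional on X, π(X) = P(T = 1 | X) satisfies 0 < π(X) < 1 almost surely, and all relevant expectations are finite, then E[(1−T)·π(X)·Y(0)/(1−π(X))] = E[π(X)·Y(0)] = E[T·Y(0)], so that E[(1−T)·π(X)·Y/(1−π(X))] / P(T=1) = E[Y(0) | T = 1] where Y = T·Y(1) + (1−T)·Y(0). -/
open MeasureTheory ProbabilityTheory

/-- Pull-out property in integral form. -/
lemma pull_aux {Ω : Type*} {mΩ : MeasurableSpace Ω} {μ : Measure Ω}
    {m' : MeasurableSpace Ω} (hm' : m' ≤ mΩ) [SigmaFinite (μ.trim hm')] {h g : Ω → ℝ}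
    (hh : StronglyMeasurable[m'] h) (hhg : Integrable (fun ω => h ω * g ω) μ)
    (hg : Integrable g μ) :
    ∫ ω, h ω * (μ[g|m']) ω ∂μ = ∫ ω, h ω * g ω ∂μ := by
  have h1 : μ[(fun ω => h ω * g ω)|m'] =ᵐ[μ] fun ω => h ω * (μ[g|m']) ω :=
    condExp_mul_of_stronglyMeasurable_left hh hhg hg
  calc ∫ ω, h ω * (μ[g|m']) ω ∂μ
      = ∫ ω, (μ[(fun ω => h ω * g ω)|m']) ω ∂μ := (integral_congr_ae h1).symm
    _ = ∫ ω, h ω * g ω ∂μ := integral_condExp hm'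

lemma att_aux {Ω : Type*} {m' : MeasurableSpace Ω} {mΩ : MeasurableSpace Ω}
    [StandardBorelSpace Ω] (hm' : m' ≤ mΩ)
    (μ : Measure Ω) [IsProbabilityMeasure μ]
    (T : Ω → ℝ) (hT : Measurable T) (hT01 : ∀ ω, T ω = 0 ∨ T ω = 1)
    (Y0 Y1 : Ω → ℝ) (hY0 : Measurable Y0) (hY1 : Measurable Y1)
    (hindep : CondIndepFun m' hm' T (fun ω => (Y0 ω, Y1 ω)) μ)
    (π : Ω → ℝ) (hπ : π =ᵐ[μ] μ[T | m'])
    (hpos : ∀ᵐ ω ∂μ, 0 < π ω ∧ π ω < 1)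
    (hY0int : Integrable Y0 μ) (hY1int : Integrable Y1 μ)
    (hint0 : Integrable (fun ω => (1 - T ω) * π ω * Y0 ω / (1 - π ω)) μ)
    (hintπ : Integrable (fun ω => π ω * Y0 ω) μ) :
    (∫ ω, (1 - T ω) * π ω * Y0 ω / (1 - π ω) ∂μ = ∫ ω, π ω * Y0 ω ∂μ) ∧
      (∫ ω, π ω * Y0 ω ∂μ = ∫ ω, T ω * Y0 ω ∂μ) := by
  set Z : Ω → ℝ := μ[T|m'] with hZ_def
  have hπZ : π =ᵐ[μ] Z := hπ
  have hZm : StronglyMeasurable[m'] Z := stronglyMeasurable_condExp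
  have hZmΩ : Measurable Z := (hZm.mono hm').measurable
  have hZ01 : ∀ᵐ ω ∂μ, 0 < Z ω ∧ Z ω < 1 := by
    filter_upwards [hpos, hπZ] with ω h1 h2
    rw [← h2]; exact h1
  have hTbd : ∀ ω, ‖T ω‖ ≤ 1 := by
    intro ω; rcases hT01 ω with h | h <;> simp [h]
  have hTY0 : Integrable (fun ω => T ω * Y0 ω) μ :=
    hY0int.bdd_mul (c := 1) hT.aestronglyMeasurable (Filter.Eventually.of_forall hTbd)
  have hV : Measurable (fun ω => (Y0 ω, Y1 ω)) := hY0.prodMk hY1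
  have hA : MeasurableSet (T ⁻¹' {1}) := hT (measurableSet_singleton 1)
  have hTA : T = (T ⁻¹' {1}).indicator (fun _ => (1 : ℝ)) := by
    funext ω
    rcases hT01 ω with h | h
    · have hω : ω ∉ T ⁻¹' {1} := by simp [Set.mem_preimage, h]
      simp [Set.indicator_of_notMem hω, h]
    · have hω : ω ∈ T ⁻¹' {1} := by simp [Set.mem_preimage, h]
      simp [Set.indicator_of_mem hω, h]
  have hZA : (μ⟦T ⁻¹' {1}|m'⟧) = Z := by rw [hZ_def]; exact congrArg _ hTA.symm
  have hCI := (condIndepFun_iff_condExp_inter_preimage_eq_mul (hm' := hm') hT hV).mp hindep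
  -- set-level identity
  have hset : ∀ t : Set (ℝ × ℝ), MeasurableSet t → ∀ s : Set Ω, MeasurableSet[m'] s →
      μ ((fun ω => (Y0 ω, Y1 ω)) ⁻¹' t ∩ (s ∩ T ⁻¹' {1}))
        = ∫⁻ ω in (fun ω => (Y0 ω, Y1 ω)) ⁻¹' t, ENNReal.ofReal (s.indicator Z ω) ∂μ := by
    intro t ht s hs
    have hsΩ : MeasurableSet s := hm' s hs
    have htΩ : MeasurableSet ((fun ω => (Y0 ω, Y1 ω)) ⁻¹' t) := hV ht
    have hB : MeasurableSet (T ⁻¹' {1} ∩ (fun ω => (Y0 ω, Y1 ω)) ⁻¹' t) := hA.inter htΩ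
    have hBind : Integrable ((T ⁻¹' {1} ∩ (fun ω => (Y0 ω, Y1 ω)) ⁻¹' t).indicator
        fun _ => (1 : ℝ)) μ := (integrable_const 1).indicator hB
    have htind : Integrable (((fun ω => (Y0 ω, Y1 ω)) ⁻¹' t).indicator fun _ => (1 : ℝ)) μ :=
      (integrable_const 1).indicator htΩ
    have conv : ∀ F : Ω → ℝ, ∫ ω in s, Z ω * F ω ∂μ = ∫ ω, (s.indicator Z) ω * F ω ∂μ := by
      intro F
      rw [← integral_indicator hsΩ]
      congr 1
      funext ω
      by_cases hω : ω ∈ s <;> simp [Set.indicator, hω]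
    have hindbd : ∀ᵐ ω ∂μ, ‖s.indicator Z ω‖ ≤ 1 := by
      filter_upwards [hZ01] with ω hω
      by_cases hωs : ω ∈ s
      · rw [Set.indicator_of_mem hωs, Real.norm_eq_abs, abs_le]
        constructor <;> linarith [hω.1, hω.2]
      · simp [Set.indicator_of_notMem hωs]
    have hsZsm : AEStronglyMeasurable (s.indicator Z) μ :=
      (hZmΩ.indicator hsΩ).aestronglyMeasurable
    have hprod : Integrable
        (fun ω => s.indicator Z ω *
          ((fun ω => (Y0 ω, Y1 ω)) ⁻¹' t).indicator (fun _ => (1 : ℝ)) ω) μ :=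
      htind.bdd_mul hsZsm hindbd
    have E1 : ∫ ω in s, (μ⟦T ⁻¹' {1} ∩ (fun ω => (Y0 ω, Y1 ω)) ⁻¹' t|m'⟧) ω ∂μ
        = ∫ ω in s, (T ⁻¹' {1} ∩ (fun ω => (Y0 ω, Y1 ω)) ⁻¹' t).indicator
            (fun _ => (1 : ℝ)) ω ∂μ :=
      setIntegral_condExp hm' hBind hs
    have E2 : ∫ ω in s, (μ⟦T ⁻¹' {1} ∩ (fun ω => (Y0 ω, Y1 ω)) ⁻¹' t|m'⟧) ω ∂μ
        = ∫ ω in s, Z ω * (μ⟦(fun ω => (Y0 ω, Y1 ω)) ⁻¹' t|m'⟧) ω ∂μ := by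
      refine setIntegral_congr_ae hsΩ ?_
      filter_upwards [hCI {1} t (measurableSet_singleton 1) ht] with ω hω
      intro _
      rw [hω, hZA]
    have E3 : ∫ ω in s, Z ω * (μ⟦(fun ω => (Y0 ω, Y1 ω)) ⁻¹' t|m'⟧) ω ∂μ
        = ∫ ω in s, Z ω * ((fun ω => (Y0 ω, Y1 ω)) ⁻¹' t).indicator (fun _ => (1 : ℝ)) ω ∂μ := by
      rw [conv, conv]
      exact pull_aux hm' (hZm.indicator hs) hprod htind
    have E4 : ∫ ω in s, (T ⁻¹' {1} ∩ (fun ω => (Y0 ω, Y1 ω)) ⁻¹' t).indicator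
        (fun _ => (1 : ℝ)) ω ∂μ
        = (μ (s ∩ (T ⁻¹' {1} ∩ (fun ω => (Y0 ω, Y1 ω)) ⁻¹' t))).toReal := by
      rw [← integral_indicator hsΩ, Set.indicator_indicator,
        integral_indicator_const (1 : ℝ) (hsΩ.inter hB)]
      simp
      rfl
    have Ereal : (μ (s ∩ (T ⁻¹' {1} ∩ (fun ω => (Y0 ω, Y1 ω)) ⁻¹' t))).toReal
        = ∫ ω, (s.indicator Z) ω *
            ((fun ω => (Y0 ω, Y1 ω)) ⁻¹' t).indicator (fun _ => (1 : ℝ)) ω ∂μ := by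
      rw [← E4, ← E1, E2, E3, conv]
    have hnn : 0 ≤ᵐ[μ] fun ω => (s.indicator Z) ω *
        ((fun ω => (Y0 ω, Y1 ω)) ⁻¹' t).indicator (fun _ => (1 : ℝ)) ω := by
      filter_upwards [hZ01] with ω hω
      by_cases hωs : ω ∈ s <;> by_cases hωt : ω ∈ (fun ω => (Y0 ω, Y1 ω)) ⁻¹' t <;>
        simp [Set.indicator, hωs, hωt, le_of_lt hω.1]
    have hlift : ENNReal.ofReal
        ((μ (s ∩ (T ⁻¹' {1} ∩ (fun ω => (Y0 ω, Y1 ω)) ⁻¹' t))).toReal)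
        = ∫⁻ ω, ENNReal.ofReal ((s.indicator Z) ω *
            ((fun ω => (Y0 ω, Y1 ω)) ⁻¹' t).indicator (fun _ => (1 : ℝ)) ω) ∂μ := by
      rw [Ereal]
      exact ofReal_integral_eq_lintegral_ofReal hprod hnn
    rw [ENNReal.ofReal_toReal (measure_ne_top μ _)] at hlift
    have hsets : (fun ω => (Y0 ω, Y1 ω)) ⁻¹' t ∩ (s ∩ T ⁻¹' {1})
        = s ∩ (T ⁻¹' {1} ∩ (fun ω => (Y0 ω, Y1 ω)) ⁻¹' t) := by
      ext ω; simp [Set.mem_inter_iff]; tauto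
    rw [hsets, hlift, ← lintegral_indicator htΩ]
    refine lintegral_congr fun ω => ?_
    by_cases hωs : ω ∈ s <;> by_cases hωt : ω ∈ (fun ω => (Y0 ω, Y1 ω)) ⁻¹' t <;>
      simp [Set.indicator, hωs, hωt]
  -- key integral identity
  have hkey : ∀ s : Set Ω, MeasurableSet[m'] s →
      ∫ ω, s.indicator (fun ω => T ω * Y0 ω) ω ∂μ
        = ∫ ω, s.indicator (fun ω => Z ω * Y0 ω) ω ∂μ := by
    intro s hs
    have hsΩ : MeasurableSet s := hm' s hs
    have hmap : Measure.map (fun ω => (Y0 ω, Y1 ω)) (μ.restrict (s ∩ T ⁻¹' {1}))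
        = Measure.map (fun ω => (Y0 ω, Y1 ω))
            (μ.withDensity (fun ω => ENNReal.ofReal (s.indicator Z ω))) := by
      ext t ht
      rw [Measure.map_apply hV ht, Measure.map_apply hV ht,
        Measure.restrict_apply (hV ht), withDensity_apply _ (hV ht)]
      exact hset t ht s hs
    have hfst : AEStronglyMeasurable (fun p : ℝ × ℝ => p.1)
        (Measure.map (fun ω => (Y0 ω, Y1 ω)) (μ.restrict (s ∩ T ⁻¹' {1}))) :=
      measurable_fst.aestronglyMeasurable
    have hfst2 : AEStronglyMeasurable (fun p : ℝ × ℝ => p.1)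
        (Measure.map (fun ω => (Y0 ω, Y1 ω))
          (μ.withDensity (fun ω => ENNReal.ofReal (s.indicator Z ω)))) :=
      measurable_fst.aestronglyMeasurable
    have h1 : ∫ ω, s.indicator (fun ω => T ω * Y0 ω) ω ∂μ
        = ∫ p, p.1 ∂(Measure.map (fun ω => (Y0 ω, Y1 ω)) (μ.restrict (s ∩ T ⁻¹' {1}))) := by
      rw [integral_map hV.aemeasurable hfst]
      rw [← integral_indicator (hsΩ.inter hA)]
      congr 1
      funext ω
      rcases hT01 ω with h | h
      · have hω : ω ∉ T ⁻¹' {1} := by simp [Set.mem_preimage, h]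
        by_cases hωs : ω ∈ s <;>
          simp [Set.indicator, hωs, hω, h]
      · have hω : ω ∈ T ⁻¹' {1} := by simp [Set.mem_preimage, h]
        by_cases hωs : ω ∈ s <;>
          simp [Set.indicator, hωs, hω, h]
    have hwm : Measurable (fun ω => (s.indicator Z ω).toNNReal) :=
      measurable_real_toNNReal.comp (hZmΩ.indicator hsΩ)
    have h2 : ∫ p, p.1 ∂(Measure.map (fun ω => (Y0 ω, Y1 ω))
          (μ.withDensity (fun ω => ENNReal.ofReal (s.indicator Z ω))))
        = ∫ ω, (s.indicator Z ω).toNNReal • Y0 ω ∂μ := by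
      rw [integral_map hV.aemeasurable hfst2]
      exact integral_withDensity_eq_integral_smul hwm Y0
    have h3 : ∫ ω, (s.indicator Z ω).toNNReal • Y0 ω ∂μ
        = ∫ ω, s.indicator (fun ω => Z ω * Y0 ω) ω ∂μ := by
      refine integral_congr_ae ?_
      filter_upwards [hZ01] with ω hω
      by_cases hωs : ω ∈ s
      · rw [Set.indicator_of_mem hωs, Set.indicator_of_mem hωs, NNReal.smul_def,
          Real.coe_toNNReal _ hω.1.le, smul_eq_mul]
      · simp [Set.indicator_of_notMem hωs]
    rw [h1, hmap, h2, h3]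
  -- conditional expectation identity (Lemma A)
  have hZY0m : AEStronglyMeasurable[m'] (fun ω => Z ω * (μ[Y0|m']) ω) μ :=
    StronglyMeasurable.aestronglyMeasurable (hZm.mul stronglyMeasurable_condExp)
  have hZbd : ∀ᵐ ω ∂μ, ‖Z ω‖ ≤ 1 := by
    filter_upwards [hZ01] with ω hω
    rw [Real.norm_eq_abs, abs_le]; constructor <;> linarith [hω.1, hω.2]
  have hZcond_int : Integrable (fun ω => Z ω * (μ[Y0|m']) ω) μ :=
    integrable_condExp.bdd_mul (hZmΩ.aestronglyMeasurable) hZbd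
  have hZY0int : Integrable (fun ω => Z ω * Y0 ω) μ :=
    hY0int.bdd_mul (hZmΩ.aestronglyMeasurable) hZbd
  have hlemA : μ[(fun ω => T ω * Y0 ω)|m'] =ᵐ[μ] fun ω => Z ω * (μ[Y0|m']) ω := by
    refine (ae_eq_condExp_of_forall_setIntegral_eq hm' hTY0
      (fun _ _ _ => hZcond_int.integrableOn) (fun s hs _ => ?_) hZY0m).symm
    have hsΩ : MeasurableSet s := hm' s hs
    have hconv : ∀ F : Ω → ℝ, ∫ ω in s, Z ω * F ω ∂μ = ∫ ω, (s.indicator Z) ω * F ω ∂μ := by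
      intro F
      rw [← integral_indicator hsΩ]
      congr 1
      funext ω
      by_cases hω : ω ∈ s <;> simp [Set.indicator, hω]
    have hindbd : ∀ᵐ ω ∂μ, ‖s.indicator Z ω‖ ≤ 1 := by
      filter_upwards [hZ01] with ω hω
      by_cases hωs : ω ∈ s
      · rw [Set.indicator_of_mem hωs, Real.norm_eq_abs, abs_le]
        constructor <;> linarith [hω.1, hω.2]
      · simp [Set.indicator_of_notMem hωs]
    have hprod : Integrable (fun ω => s.indicator Z ω * Y0 ω) μ :=
      hY0int.bdd_mul ((hZmΩ.indicator hsΩ).aestronglyMeasurable) hindbd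
    calc ∫ ω in s, Z ω * (μ[Y0|m']) ω ∂μ
        = ∫ ω, (s.indicator Z) ω * (μ[Y0|m']) ω ∂μ := hconv _
      _ = ∫ ω, (s.indicator Z) ω * Y0 ω ∂μ := pull_aux hm' (hZm.indicator hs) hprod hY0int
      _ = ∫ ω, s.indicator (fun ω => Z ω * Y0 ω) ω ∂μ := by
          congr 1; funext ω
          by_cases hω : ω ∈ s <;> simp [Set.indicator, hω]
      _ = ∫ ω, s.indicator (fun ω => T ω * Y0 ω) ω ∂μ := (hkey s hs).symm
      _ = ∫ ω in s, T ω * Y0 ω ∂μ := integral_indicator hsΩ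
  -- the common value
  have hTY0_eq : ∫ ω, T ω * Y0 ω ∂μ = ∫ ω, Z ω * (μ[Y0|m']) ω ∂μ := by
    rw [← integral_condExp hm' (f := fun ω => T ω * Y0 ω)]
    exact integral_congr_ae hlemA
  have hπY0_eq : ∫ ω, π ω * Y0 ω ∂μ = ∫ ω, Z ω * (μ[Y0|m']) ω ∂μ := by
    have h1 : ∫ ω, π ω * Y0 ω ∂μ = ∫ ω, Z ω * Y0 ω ∂μ :=
      integral_congr_ae (hπZ.mono fun ω h => by dsimp only; rw [h])
    rw [h1, ← pull_aux hm' hZm hZY0int hY0int]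
  -- the first integral
  have hcond_g : μ[(fun ω => (1 - T ω) * Y0 ω)|m'] =ᵐ[μ]
      fun ω => (1 - Z ω) * (μ[Y0|m']) ω := by
    have hfe : (fun ω => (1 - T ω) * Y0 ω) = Y0 - fun ω => T ω * Y0 ω := by
      funext ω; simp [Pi.sub_apply]; ring
    rw [hfe]
    refine (condExp_sub hY0int hTY0 m').trans ?_
    filter_upwards [hlemA] with ω hω
    simp only [Pi.sub_apply, hω]
    ring
  have hg_int : Integrable (fun ω => (1 - T ω) * Y0 ω) μ := by
    refine hY0int.bdd_mul (c := 1) ((measurable_const.sub hT).aestronglyMeasurable) (Filter.Eventually.of_forall fun ω => ?_)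
    rcases hT01 ω with h | h <;> simp [h]
  have heq1 : (fun ω => (1 - T ω) * π ω * Y0 ω / (1 - π ω)) =ᵐ[μ]
      fun ω => (Z ω / (1 - Z ω)) * ((1 - T ω) * Y0 ω) := by
    filter_upwards [hπZ, hpos] with ω hωZ hωp
    rw [← hωZ]
    have hne : (1 : ℝ) - π ω ≠ 0 := sub_ne_zero.mpr (ne_of_lt hωp.2).symm
    field_simp
  have hWg_int : Integrable (fun ω => (Z ω / (1 - Z ω)) * ((1 - T ω) * Y0 ω)) μ :=
    hint0.congr heq1
  have hWm : StronglyMeasurable[m'] (fun ω => Z ω / (1 - Z ω)) :=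
    (hZm.measurable.div (measurable_const.sub hZm.measurable)).stronglyMeasurable
  have hfirst : ∫ ω, (1 - T ω) * π ω * Y0 ω / (1 - π ω) ∂μ
      = ∫ ω, Z ω * (μ[Y0|m']) ω ∂μ := by
    rw [integral_congr_ae heq1, ← pull_aux hm' hWm hWg_int hg_int]
    refine integral_congr_ae ?_
    filter_upwards [hcond_g, hZ01] with ω h1 h2
    rw [h1]
    have hne : (1 : ℝ) - Z ω ≠ 0 := sub_ne_zero.mpr (ne_of_lt h2.2).symm
    field_simp
  exact ⟨hfirst.trans hπY0_eq.symm, hπY0_eq.trans hTY0_eq.symm⟩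

/-- Under conditional ignorability of treatment (T ⫫ (Y(0),Y(1)) | X) and positivity,
E[(1−T)·π(X)·Y(0)/(1−π(X))] = E[π(X)·Y(0)] = E[T·Y(0)], so that the weighted mean of
the observed outcomes of control units identifies E[Y(0) | T = 1]. -/
theorem stmt_13 {Ω 𝓧 : Type*} {mΩ : MeasurableSpace Ω} [StandardBorelSpace Ω]
    [MeasurableSpace 𝓧]
    (μ : Measure Ω) [IsProbabilityMeasure μ]
    (X : Ω → 𝓧) (hX : Measurable X)
    (T : Ω → ℝ) (hT : Measurable T) (hT01 : ∀ ω, T ω = 0 ∨ T ω = 1)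
    (Y0 Y1 : Ω → ℝ) (hY0 : Measurable Y0) (hY1 : Measurable Y1)
    -- conditional ignorability: T ⫫ (Y(0), Y(1)) given X
    (hindep : CondIndepFun (MeasurableSpace.comap X inferInstance)
        (hX.comap_le) T (fun ω => (Y0 ω, Y1 ω)) μ)
    -- π = P(T = 1 | X) as the conditional expectation of T given σ(X)
    (π : Ω → ℝ) (hπ : π =ᵐ[μ] μ[T | MeasurableSpace.comap X inferInstance])
    -- positivity
    (hpos : ∀ᵐ ω ∂μ, 0 < π ω ∧ π ω < 1)
    (hT1pos : 0 < μ {ω | T ω = 1})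
    -- all relevant expectations are finite
    (hY0int : Integrable Y0 μ) (hY1int : Integrable Y1 μ)
    (hint0 : Integrable (fun ω => (1 - T ω) * π ω * Y0 ω / (1 - π ω)) μ)
    (hint : Integrable
      (fun ω => (1 - T ω) * π ω * (T ω * Y1 ω + (1 - T ω) * Y0 ω) / (1 - π ω)) μ)
    (hintπ : Integrable (fun ω => π ω * Y0 ω) μ) :
    (∫ ω, (1 - T ω) * π ω * Y0 ω / (1 - π ω) ∂μ = ∫ ω, π ω * Y0 ω ∂μ) ∧
      (∫ ω, π ω * Y0 ω ∂μ = ∫ ω, T ω * Y0 ω ∂μ) ∧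
      ((∫ ω, (1 - T ω) * π ω * (T ω * Y1 ω + (1 - T ω) * Y0 ω) / (1 - π ω) ∂μ)
          / (μ {ω | T ω = 1}).toReal
        = (∫ ω in {ω | T ω = 1}, Y0 ω ∂μ) / (μ {ω | T ω = 1}).toReal) := by
  obtain ⟨h1, h2⟩ := att_aux hX.comap_le μ T hT hT01 Y0 Y1 hY0 hY1 hindep π hπ hpos
    hY0int hY1int hint0 hintπ
  refine ⟨h1, h2, ?_⟩
  have hYeq : ∫ ω, (1 - T ω) * π ω * (T ω * Y1 ω + (1 - T ω) * Y0 ω) / (1 - π ω) ∂μ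
      = ∫ ω, (1 - T ω) * π ω * Y0 ω / (1 - π ω) ∂μ := by
    congr 1
    funext ω
    rcases hT01 ω with h | h <;> rw [h] <;> ring
  have hTind : ∫ ω, T ω * Y0 ω ∂μ = ∫ ω in {ω | T ω = 1}, Y0 ω ∂μ := by
    have hmeas : MeasurableSet {ω | T ω = 1} := hT (measurableSet_singleton 1)
    rw [← integral_indicator hmeas]
    congr 1
    funext ω
    rcases hT01 ω with h | h
    · have hω : ω ∉ {ω | T ω = 1} := by simp [h]
      simp [Set.indicator_of_notMem hω, h]
    · have hω : ω ∈ {ω | T ω = 1} := by simp [h]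
      simp [Set.indicator_of_mem hω, h]
  rw [hYeq, h1, h2, hTind]
end
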